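/- arXiv:2011.03580 — 3 statements merged into one kernel-verified Lean document; each statement's English description precedes it below -/
import Mathlib

section
/- Let δ₁ > 0, let φ : ℝ² → ℝ be twice continuously differentiable at a point x ∈ ℝ², and let r ∈ ℝ. Define ψ : ℝ² → ℝ by ψ(y) = exp(−φ(y)/δ₁) − 1. Then φ satisfies −δ₁ Δφ(x) + ‖∇φ(x)‖² = r if and only if ψ satisfies −Δψ(x) + (r/δ₁²) ψ(x) = −r/δ₁², where Δ denotes the Laplacian (the sum of the second partial derivatives, i.e. the trace of the second derivative) and ∇φ the gradient. -/
open Real Filter Topology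


/-- The Laplacian on `ℝ²`: the trace of the second derivative, i.e. the sum of the
second partial derivatives. -/
noncomputable def planarLaplacian (f : EuclideanSpace ℝ (Fin 2) → ℝ)
    (x : EuclideanSpace ℝ (Fin 2)) : ℝ :=
  ∑ i : Fin 2,
    iteratedFDeriv ℝ 2 f x ![EuclideanSpace.single i 1, EuclideanSpace.single i 1]

/-- The exponential (Cole–Hopf type) transformation `ψ = e^{−φ/δ₁} − 1` converts the
regularized Eikonal equation `−δ₁Δφ + |∇φ|² = r` into `−Δψ + (r/δ₁²)ψ = −r/δ₁²`. -/
theorem stmt_1 (δ₁ : ℝ) (hδ₁ : 0 < δ₁) (r : ℝ)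
    (φ : EuclideanSpace ℝ (Fin 2) → ℝ) (x : EuclideanSpace ℝ (Fin 2))
    (hφ : ContDiffAt ℝ 2 φ x) :
    (-δ₁ * planarLaplacian φ x + ‖gradient φ x‖ ^ 2 = r) ↔
      (-(planarLaplacian (fun y => Real.exp (-φ y / δ₁) - 1) x)
          + (r / δ₁ ^ 2) * (Real.exp (-φ x / δ₁) - 1) = -(r / δ₁ ^ 2)) := by
  have hfe : (fun y : EuclideanSpace ℝ (Fin 2) => -φ y / δ₁) = fun y => (-1/δ₁) * φ y := by
    funext y; ring
  have hev : ∀ᶠ y in 𝓝 x, DifferentiableAt ℝ φ y := by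
    filter_upwards [hφ.eventually (by simp)] with y hy
    exact hy.differentiableAt two_ne_zero
  have hF : DifferentiableAt ℝ (fderiv ℝ φ) x :=
    (hφ.fderiv_right (m := 1) le_rfl).differentiableAt one_ne_zero
  have hder : ∀ᶠ y in 𝓝 x, fderiv ℝ (fun y => Real.exp (-φ y / δ₁) - 1) y
      = (Real.exp (-φ y / δ₁) * (-1/δ₁)) • fderiv ℝ φ y := by
    filter_upwards [hev] with y hy
    have h1 : HasFDerivAt (fun y => -φ y / δ₁) ((-1/δ₁) • fderiv ℝ φ y) y := by
      rw [hfe]; exact hy.hasFDerivAt.const_smul (-1/δ₁)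
    have h2 := (h1.exp).sub_const 1
    rw [h2.fderiv, smul_smul]
  have hc : DifferentiableAt ℝ (fun y => Real.exp (-φ y / δ₁) * (-1/δ₁)) x := by
    have : DifferentiableAt ℝ (fun y => -φ y / δ₁) x := by
      rw [hfe]
      exact (hφ.differentiableAt two_ne_zero).const_mul _
    exact (Real.differentiable_exp.differentiableAt.comp x this).mul_const _
  have hD2 : fderiv ℝ (fderiv ℝ (fun y => Real.exp (-φ y / δ₁) - 1)) x
      = (Real.exp (-φ x / δ₁) * (-1/δ₁)) • fderiv ℝ (fderiv ℝ φ) x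
        + (fderiv ℝ (fun y => Real.exp (-φ y / δ₁) * (-1/δ₁)) x).smulRight (fderiv ℝ φ x) := by
    rw [Filter.EventuallyEq.fderiv_eq hder]
    exact fderiv_smul hc hF
  have hcder : ∀ v, fderiv ℝ (fun y => Real.exp (-φ y / δ₁) * (-1/δ₁)) x v
      = Real.exp (-φ x / δ₁) * ((-1/δ₁) * fderiv ℝ φ x v) * (-1/δ₁) := by
    intro v
    have h1 : HasFDerivAt (fun y => -φ y / δ₁) ((-1/δ₁) • fderiv ℝ φ x) x := by
      rw [hfe]; exact (hφ.differentiableAt two_ne_zero).hasFDerivAt.const_smul (-1/δ₁)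
    have h2 := (h1.exp).mul_const (-1/δ₁)
    rw [h2.fderiv]; simp [mul_comm]
  -- norm of gradient as sum of squares of partials
  have hgrad : ‖gradient φ x‖ ^ 2
      = ∑ i : Fin 2, (fderiv ℝ φ x (EuclideanSpace.single i 1)) ^ 2 := by
    have hip : ∀ v, fderiv ℝ φ x v = inner ℝ (gradient φ x) v := by
      intro v
      rw [gradient, InnerProductSpace.toDual_symm_apply]
    rw [← real_inner_self_eq_norm_sq]
    rw [show (inner ℝ (gradient φ x) (gradient φ x) : ℝ)
        = ∑ i : Fin 2, (gradient φ x i) * (gradient φ x i) from by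
      simp only [PiLp.inner_apply, RCLike.inner_apply, conj_trivial]]
    congr 1; funext i
    rw [hip, EuclideanSpace.inner_single_right]
    simp [sq]
  -- Laplacian of ψ
  set Ex := Real.exp (-φ x / δ₁) with hEx
  have hExpos : 0 < Ex := Real.exp_pos _
  have hLψ : planarLaplacian (fun y => Real.exp (-φ y / δ₁) - 1) x
      = Ex * (-1/δ₁) * planarLaplacian φ x
        + Ex * (1/δ₁^2) * ‖gradient φ x‖ ^ 2 := by
    rw [planarLaplacian, planarLaplacian, hgrad]
    simp only [iteratedFDeriv_two_apply]
    rw [Finset.mul_sum, Finset.mul_sum, ← Finset.sum_add_distrib]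
    congr 1; funext i
    rw [hD2]
    simp only [ContinuousLinearMap.add_apply, ContinuousLinearMap.smul_apply,
      ContinuousLinearMap.smulRight_apply, Matrix.cons_val_zero, Matrix.cons_val_one,
      Matrix.head_cons, smul_eq_mul]
    rw [hcder]
    ring
  rw [hLψ]
  set L := planarLaplacian φ x
  set G := ‖gradient φ x‖ ^ 2
  have hδ' : δ₁ ≠ 0 := ne_of_gt hδ₁
  have key : (-(Ex * (-1 / δ₁) * L + Ex * (1 / δ₁ ^ 2) * G) + r / δ₁ ^ 2 * (Ex - 1)
      + r / δ₁ ^ 2) = (Ex / δ₁ ^ 2) * (-(-δ₁ * L + G - r)) := by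
    field_simp; ring
  have hne : Ex / δ₁ ^ 2 ≠ 0 := by positivity
  constructor
  · intro h
    have h0 : -δ₁ * L + G - r = 0 := by rw [h]; ring
    rw [h0] at key
    simp only [neg_zero, mul_zero] at key
    linarith
  · intro h
    have h0 : (Ex / δ₁ ^ 2) * (-(-δ₁ * L + G - r)) = 0 := by rw [← key]; linarith
    have h1 := (mul_eq_zero.1 h0).resolve_left hne
    linarith
end

section
/- Let T > 0, let f : ℝ → ℝ be Lipschitz with constant L_f, and let u : [0,T] → ℝ² be measurable with |u(t)| ≤ 1 for a.e. t. Let ρ₁, ρ₂ : [0,T] × ℝ² → ℝ be bounded measurable functions such that for a.e. t ∈ [0,T] the map x ↦ ρ₁(t,x) is Lipschitz with constant C(t), where C : [0,T] → [0,∞) is integrable. Let x₁, x₂ : [0,T] → ℝ² satisfy the integral equations xᵢ(t) = x₀ + ∫₀ᵗ f(ρᵢ(s, xᵢ(s))) u(s) ds for all t ∈ [0,T], with the same initial value x₀ ∈ ℝ². Then for every t ∈ [0,T], |x₁(t) − x₂(t)| ≤ L_f · t · sup_{(s,y) ∈ [0,T]×ℝ²} |ρ₁(s,y) − ρ₂(s,y)|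 · exp( L_f ∫₀ᵗ C(s) ds ). -/
open MeasureTheory Set

private lemma abs_exp_sub_exp (a b : ℝ) :
    |Real.exp a - Real.exp b| ≤ Real.exp (max a b) * |a - b| := by
  rcases le_total b a with h | h
  · rw [max_eq_left h, abs_of_nonneg (sub_nonneg.mpr (Real.exp_le_exp.mpr h)),
      abs_of_nonneg (sub_nonneg.mpr h)]
    have h1 : (b - a) + 1 ≤ Real.exp (b - a) := Real.add_one_le_exp _
    have h2 : Real.exp b = Real.exp a * Real.exp (b - a) := by
      rw [← Real.exp_add]; ring_nf
    nlinarith [Real.exp_pos a]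
  · rw [max_eq_right h, abs_of_nonpos (sub_nonpos.mpr (Real.exp_le_exp.mpr h)),
      abs_of_nonpos (sub_nonpos.mpr h)]
    have h1 : (a - b) + 1 ≤ Real.exp (a - b) := Real.add_one_le_exp _
    have h2 : Real.exp a = Real.exp b * Real.exp (a - b) := by
      rw [← Real.exp_add]; ring_nf
    nlinarith [Real.exp_pos b]

private lemma intInt_mul_contOn {k ψ : ℝ → ℝ} {a b : ℝ} (hk : Integrable k volume)
    (hab : a ≤ b) (hψ : ContinuousOn ψ (Icc a b)) :
    IntervalIntegrable (fun s => k s * ψ s) volume a b := by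
  obtain ⟨Cb, hCb⟩ := isCompact_Icc.exists_bound_of_continuousOn hψ
  rw [intervalIntegrable_iff_integrableOn_Ioc_of_le hab]
  have hsub : Ioc a b ⊆ Icc a b := Ioc_subset_Icc_self
  have h1 : IntegrableOn (fun s => ψ s * k s) (Ioc a b) volume :=
    Integrable.bdd_mul hk.integrableOn
      ((hψ.mono hsub).aestronglyMeasurable measurableSet_Ioc)
      ((ae_restrict_mem measurableSet_Ioc).mono fun x hx => hCb x (hsub hx))
  exact h1.congr (Filter.Eventually.of_forall fun x => mul_comm _ _)

set_option maxHeartbeats 1000000 in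
private lemma expKey {k : ℝ → ℝ} (hk_nn : ∀ s, 0 ≤ k s) (hk_int : Integrable k volume)
    {t : ℝ} (ht : 0 ≤ t) :
    ∫ s in (0:ℝ)..t, k s * Real.exp (∫ r in (0:ℝ)..s, k r) ≤
      Real.exp (∫ r in (0:ℝ)..t, k r) - 1 := by
  set K : ℝ → ℝ := fun s => ∫ r in (0:ℝ)..s, k r with hK
  have hKcont : Continuous K := hk_int.continuous_primitive 0
  have hKmono : Monotone K := by
    intro a b hab
    have h1 : K a + ∫ r in a..b, k r = K b :=
      intervalIntegral.integral_add_adjacent_intervals hk_int.intervalIntegrable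
        hk_int.intervalIntegrable
    have h2 : 0 ≤ ∫ r in a..b, k r :=
      intervalIntegral.integral_nonneg hab fun x _ => hk_nn x
    linarith
  have hK0 : K 0 = 0 := intervalIntegral.integral_same
  have hKt_nn : 0 ≤ K t := hK0 ▸ hKmono ht
  refine le_of_forall_pos_le_add fun δ hδ => ?_
  set M : ℝ := Real.exp (K t) + (K t + 1) * Real.exp (K t + 1) + Real.exp (K t + 1) with hM
  have hM_pos : 0 < M := by positivity
  set ε : ℝ := min 1 (δ / M) with hε
  have hε_pos : 0 < ε := lt_min one_pos (div_pos hδ hM_pos)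
  have hε_le_one : ε ≤ 1 := min_le_left _ _
  have hεM : ε * M ≤ δ := by
    have h1 : ε ≤ δ / M := min_le_right _ _
    calc ε * M ≤ (δ / M) * M := by nlinarith
    _ = δ := by field_simp
  obtain ⟨g, hg_supp, hg_L1, hg_cont, hg_int⟩ :=
    hk_int.exists_hasCompactSupport_integral_sub_le hε_pos
  set gp : ℝ → ℝ := fun x => max (g x) 0 with hgp
  have hgp_cont : Continuous gp := hg_cont.max continuous_const
  have hgp_nn : ∀ x, 0 ≤ gp x := fun x => le_max_right _ _
  have hgp_int : Integrable gp volume := hg_int.pos_part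
  -- L¹ bound for gp
  have hptw : ∀ x, |k x - gp x| ≤ |k x - g x| := by
    intro x
    rcases le_total (g x) 0 with h | h
    · rw [show gp x = 0 from max_eq_right h, sub_zero, abs_of_nonneg (hk_nn x),
        abs_of_nonneg (by linarith [hk_nn x] : 0 ≤ k x - g x)]
      linarith
    · rw [show gp x = g x from max_eq_left h]
  have habs_int : Integrable (fun x => |k x - gp x|) volume := (hk_int.sub hgp_int).abs
  have hgp_L1 : ∫ x, |k x - gp x| ≤ ε := by
    calc ∫ x, |k x - gp x| ≤ ∫ x, |k x - g x| :=
          integral_mono habs_int (hk_int.sub hg_int).abs hptw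
    _ = ∫ x, ‖k x - g x‖ := by simp [Real.norm_eq_abs]
    _ ≤ ε := hg_L1
  -- primitive of gp
  set G : ℝ → ℝ := fun s => ∫ r in (0:ℝ)..s, gp r with hG
  have hGd : ∀ s, HasDerivAt G (gp s) s := fun s =>
    (hgp_cont.integral_hasStrictDerivAt 0 s).hasDerivAt
  have hGcont : Continuous G := by
    rw [continuous_iff_continuousAt]; exact fun s => (hGd s).continuousAt
  have hG0 : G 0 = 0 := intervalIntegral.integral_same
  have hGmono : Monotone G := by
    intro a b hab
    have h1 : G a + ∫ r in a..b, gp r = G b :=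
      intervalIntegral.integral_add_adjacent_intervals hgp_int.intervalIntegrable
        hgp_int.intervalIntegrable
    have h2 : 0 ≤ ∫ r in a..b, gp r :=
      intervalIntegral.integral_nonneg hab fun x _ => hgp_nn x
    linarith
  -- distance between K and G on [0,t]
  have hKG : ∀ s ∈ Icc (0:ℝ) t, |K s - G s| ≤ ε := by
    intro s hs
    have h1 : K s - G s = ∫ r in (0:ℝ)..s, (k r - gp r) :=
      (intervalIntegral.integral_sub hk_int.intervalIntegrable
        hgp_int.intervalIntegrable).symm
    rw [h1]
    calc |∫ r in (0:ℝ)..s, (k r - gp r)| ≤ ∫ r in (0:ℝ)..s, |k r - gp r| :=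
          intervalIntegral.abs_integral_le_integral_abs hs.1
    _ ≤ ∫ x, |k x - gp x| := by
          rw [intervalIntegral.integral_of_le hs.1]
          exact setIntegral_le_integral habs_int
            (Filter.Eventually.of_forall fun x => abs_nonneg _)
    _ ≤ ε := hgp_L1
  -- FTC for the smooth approximation
  have hFTC : ∫ s in (0:ℝ)..t, gp s * Real.exp (G s) = Real.exp (G t) - 1 := by
    have h1 : ∫ s in (0:ℝ)..t, Real.exp (G s) * gp s
        = Real.exp (G t) - Real.exp (G 0) :=
      intervalIntegral.integral_eq_sub_of_hasDerivAt (fun s _ => (hGd s).exp)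
        (((Real.continuous_exp.comp hGcont).mul hgp_cont).intervalIntegrable 0 t)
    rw [hG0, Real.exp_zero] at h1
    rw [← h1]
    exact intervalIntegral.integral_congr fun s _ => mul_comm _ _
  -- integrability of the two integrands on [0,t]
  have hp_int : IntervalIntegrable (fun s => k s * Real.exp (K s)) volume 0 t :=
    intInt_mul_contOn hk_int ht ((Real.continuous_exp.comp hKcont).continuousOn)
  have hq_int : IntervalIntegrable (fun s => gp s * Real.exp (G s)) volume 0 t :=
    (hgp_cont.mul (Real.continuous_exp.comp hGcont)).intervalIntegrable 0 t
  -- pointwise bound for the difference on [0,t]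
  have hdiff_ptw : ∀ s ∈ Icc (0:ℝ) t,
      k s * Real.exp (K s) - gp s * Real.exp (G s) ≤
        |k s - gp s| * Real.exp (K t) + gp s * (Real.exp (K t + 1) * ε) := by
    intro s hs
    have hKs_le : K s ≤ K t := hKmono hs.2
    have hKs_nn : 0 ≤ K s := hK0 ▸ hKmono hs.1
    have hGs_le : G s ≤ K t + 1 := by
      have := abs_le.mp (hKG s hs); linarith
    have hexps : Real.exp (K s) ≤ Real.exp (K t) := Real.exp_le_exp.mpr hKs_le
    have h1 : k s * Real.exp (K s) - gp s * Real.exp (K s)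
        ≤ |k s - gp s| * Real.exp (K t) := by
      have h2 : (k s - gp s) * Real.exp (K s) ≤ |k s - gp s| * Real.exp (K t) := by
        calc (k s - gp s) * Real.exp (K s) ≤ |k s - gp s| * Real.exp (K s) := by
              nlinarith [le_abs_self (k s - gp s), Real.exp_pos (K s)]
        _ ≤ |k s - gp s| * Real.exp (K t) := by
              nlinarith [abs_nonneg (k s - gp s)]
      linarith [h2, (by ring : (k s - gp s) * Real.exp (K s)
        = k s * Real.exp (K s) - gp s * Real.exp (K s))]
    have h3 : gp s * Real.exp (K s) - gp s * Real.exp (G s)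
        ≤ gp s * (Real.exp (K t + 1) * ε) := by
      have h4 : |Real.exp (K s) - Real.exp (G s)|
          ≤ Real.exp (max (K s) (G s)) * |K s - G s| := abs_exp_sub_exp _ _
      have h5 : max (K s) (G s) ≤ K t + 1 := max_le (by linarith) hGs_le
      have h6 : Real.exp (max (K s) (G s)) ≤ Real.exp (K t + 1) := Real.exp_le_exp.mpr h5
      have h7 : Real.exp (K s) - Real.exp (G s) ≤ Real.exp (K t + 1) * ε := by
        have := le_abs_self (Real.exp (K s) - Real.exp (G s))
        have h8 := hKG s hs
        nlinarith [abs_nonneg (K s - G s), Real.exp_pos (max (K s) (G s))]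
      calc gp s * Real.exp (K s) - gp s * Real.exp (G s)
          = gp s * (Real.exp (K s) - Real.exp (G s)) := by ring
      _ ≤ gp s * (Real.exp (K t + 1) * ε) := by nlinarith [hgp_nn s]
    linarith
  -- integral bound for the difference
  have hrhs_int : IntervalIntegrable
      (fun s => |k s - gp s| * Real.exp (K t) + gp s * (Real.exp (K t + 1) * ε)) volume 0 t :=
    ((habs_int.intervalIntegrable).mul_const _).add
      ((hgp_cont.intervalIntegrable 0 t).mul_const _)
  have hdiff_integral :
      (∫ s in (0:ℝ)..t, (k s * Real.exp (K s) - gp s * Real.exp (G s)))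
        ≤ ε * Real.exp (K t) + (K t + 1) * (Real.exp (K t + 1) * ε) := by
    have h1 : (∫ s in (0:ℝ)..t, (k s * Real.exp (K s) - gp s * Real.exp (G s)))
        ≤ ∫ s in (0:ℝ)..t, (|k s - gp s| * Real.exp (K t) + gp s * (Real.exp (K t + 1) * ε)) :=
      intervalIntegral.integral_mono_on ht (hp_int.sub hq_int) hrhs_int
        (fun s hs => hdiff_ptw s hs)
    have h2 : ∫ s in (0:ℝ)..t, (|k s - gp s| * Real.exp (K t) + gp s * (Real.exp (K t + 1) * ε))
        = (∫ s in (0:ℝ)..t, |k s - gp s|) * Real.exp (K t)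
          + (∫ s in (0:ℝ)..t, gp s) * (Real.exp (K t + 1) * ε) := by
      rw [intervalIntegral.integral_add ((habs_int.intervalIntegrable).mul_const _)
        ((hgp_cont.intervalIntegrable 0 t).mul_const _),
        intervalIntegral.integral_mul_const, intervalIntegral.integral_mul_const]
    have h3 : ∫ s in (0:ℝ)..t, |k s - gp s| ≤ ε := by
      calc ∫ s in (0:ℝ)..t, |k s - gp s| ≤ ∫ x, |k x - gp x| := by
            rw [intervalIntegral.integral_of_le ht]
            exact setIntegral_le_integral habs_int
              (Filter.Eventually.of_forall fun x => abs_nonneg _)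
      _ ≤ ε := hgp_L1
    have h4 : ∫ s in (0:ℝ)..t, gp s ≤ K t + 1 := by
      have h5 : (∫ s in (0:ℝ)..t, gp s) = G t := by rw [hG]
      have h6 := abs_le.mp (hKG t ⟨le_refl 0 |>.trans ht, le_refl t⟩)
      rw [h5]; linarith
    have h7 : 0 ≤ ∫ s in (0:ℝ)..t, gp s :=
      intervalIntegral.integral_nonneg ht fun x _ => hgp_nn x
    calc (∫ s in (0:ℝ)..t, (k s * Real.exp (K s) - gp s * Real.exp (G s)))
        ≤ (∫ s in (0:ℝ)..t, |k s - gp s|) * Real.exp (K t)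
          + (∫ s in (0:ℝ)..t, gp s) * (Real.exp (K t + 1) * ε) := by rw [← h2]; exact h1
    _ ≤ ε * Real.exp (K t) + (K t + 1) * (Real.exp (K t + 1) * ε) := by
        have e1 := Real.exp_pos (K t)
        have e2 := Real.exp_pos (K t + 1)
        have h0 : 0 ≤ ∫ s in (0:ℝ)..t, |k s - gp s| :=
          intervalIntegral.integral_nonneg ht fun x _ => abs_nonneg _
        nlinarith [mul_nonneg (sub_nonneg.mpr h3) e1.le,
          mul_nonneg (sub_nonneg.mpr h4) (mul_nonneg e2.le hε_pos.le)]
  -- the approximated endpoint value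
  have hGt_bound : Real.exp (G t) - 1 ≤ Real.exp (K t) - 1 + ε * Real.exp (K t + 1) := by
    have h1 : G t ≤ K t + ε := by
      have := abs_le.mp (hKG t ⟨ht, le_refl t⟩); linarith
    have h2 : Real.exp (G t) ≤ Real.exp (K t) * Real.exp ε := by
      rw [← Real.exp_add]; exact Real.exp_le_exp.mpr h1
    have h3 : Real.exp ε ≤ 1 + ε * Real.exp 1 := by
      have h4 : 1 - ε ≤ Real.exp (-ε) := by
        have := Real.add_one_le_exp (-ε); linarith
      have h5 : Real.exp (-ε) * Real.exp ε = 1 := by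
        rw [← Real.exp_add]; simp
      have h6 : Real.exp ε ≤ Real.exp 1 := Real.exp_le_exp.mpr hε_le_one
      nlinarith [Real.exp_pos ε]
    have h7 : Real.exp (K t) * Real.exp 1 = Real.exp (K t + 1) := by
      rw [← Real.exp_add]
    nlinarith [Real.exp_pos (K t), hε_pos.le]
  have hsplit : ∫ s in (0:ℝ)..t, k s * Real.exp (K s)
      = (∫ s in (0:ℝ)..t, (k s * Real.exp (K s) - gp s * Real.exp (G s)))
        + ∫ s in (0:ℝ)..t, gp s * Real.exp (G s) := by
    rw [intervalIntegral.integral_sub hp_int hq_int]; ring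
  rw [hsplit, hFTC]
  have hfinal : ε * Real.exp (K t) + (K t + 1) * (Real.exp (K t + 1) * ε)
      + ε * Real.exp (K t + 1) ≤ δ := by
    calc ε * Real.exp (K t) + (K t + 1) * (Real.exp (K t + 1) * ε) + ε * Real.exp (K t + 1)
        = ε * M := by rw [hM]; ring
    _ ≤ δ := hεM
  linarith [hdiff_integral, hGt_bound]

private lemma gronwall {T : ℝ} {k φ : ℝ → ℝ} (hk_nn : ∀ s, 0 ≤ k s)
    (hk_int : Integrable k volume) (hφ_cont : ContinuousOn φ (Icc 0 T))
    {A : ℝ} (hA : 0 ≤ A)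
    (h : ∀ t ∈ Icc (0:ℝ) T, φ t ≤ A * t + ∫ s in (0:ℝ)..t, k s * φ s) :
    ∀ t ∈ Icc (0:ℝ) T, φ t ≤ A * t * Real.exp (∫ s in (0:ℝ)..t, k s) := by
  set K : ℝ → ℝ := fun s => ∫ r in (0:ℝ)..s, k r with hK
  have hKcont : Continuous K := hk_int.continuous_primitive 0
  intro t₀ ht₀
  have hsub₀ : Icc (0:ℝ) t₀ ⊆ Icc 0 T := Icc_subset_Icc_right ht₀.2
  -- the ε-claim
  have hsuff : ∀ ε > (0:ℝ), φ t₀ ≤ (A * t₀ + ε) * Real.exp (K t₀) := by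
    intro ε hε
    by_contra hcon
    push_neg at hcon
    set c : ℝ := A * t₀ + ε with hc
    have hc_pos : 0 < c := by nlinarith [mul_nonneg hA ht₀.1]
    set B : Set ℝ := {s | s ∈ Icc (0:ℝ) t₀ ∧ c * Real.exp (K s) ≤ φ s} with hB
    have hB_ne : t₀ ∈ B := ⟨⟨ht₀.1, le_refl t₀⟩, hcon.le⟩
    have hB_closed : IsClosed B := by
      have h1 : ContinuousOn (fun s => φ s - c * Real.exp (K s)) (Icc 0 t₀) :=
        (hφ_cont.mono hsub₀).sub
          ((continuous_const.mul (Real.continuous_exp.comp hKcont)).continuousOn)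
      have h2 : B = Icc (0:ℝ) t₀ ∩ (fun s => φ s - c * Real.exp (K s)) ⁻¹' (Ici 0) := by
        ext s; simp [hB, sub_nonneg, and_comm]
      rw [h2]
      exact h1.preimage_isClosed_of_isClosed isClosed_Icc isClosed_Ici
    have hbdd : BddBelow B := ⟨0, fun s hs => hs.1.1⟩
    set ts : ℝ := sInf B with hts_def
    have hts_mem : ts ∈ B := hB_closed.csInf_mem ⟨t₀, hB_ne⟩ hbdd
    have hts_Icc : ts ∈ Icc (0:ℝ) t₀ := hts_mem.1
    have hts_ineq : c * Real.exp (K ts) ≤ φ ts := hts_mem.2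
    -- a.e. bound on [0, ts]
    have hae : (fun s => k s * φ s) ≤ᵐ[volume.restrict (Icc (0:ℝ) ts)]
        fun s => k s * (c * Real.exp (K s)) := by
      have h_ne : ∀ᵐ s ∂(volume : Measure ℝ), s ≠ ts := by
        rw [ae_iff]
        have : {a : ℝ | ¬a ≠ ts} = {ts} := by ext a; simp
        rw [this]
        exact measure_singleton ts
      filter_upwards [ae_restrict_of_ae h_ne, ae_restrict_mem measurableSet_Icc]
        with s hs hmem
      have hslt : s < ts := lt_of_le_of_ne hmem.2 hs
      have hφs : φ s ≤ c * Real.exp (K s) := by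
        by_contra h'
        push_neg at h'
        have hsB : s ∈ B := ⟨⟨hmem.1, hslt.le.trans hts_Icc.2⟩, h'.le⟩
        exact absurd (csInf_le hbdd hsB) (not_le.mpr hslt)
      exact mul_le_mul_of_nonneg_left hφs (hk_nn s)
    -- integrabilities
    have hkφ : IntervalIntegrable (fun s => k s * φ s) volume 0 ts :=
      intInt_mul_contOn hk_int hts_Icc.1
        (hφ_cont.mono (Icc_subset_Icc_right (hts_Icc.2.trans ht₀.2)))
    have hkcK : IntervalIntegrable (fun s => k s * (c * Real.exp (K s))) volume 0 ts :=
      intInt_mul_contOn hk_int hts_Icc.1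
        ((continuous_const.mul (Real.continuous_exp.comp hKcont)).continuousOn)
    -- the chain
    have h1 : φ ts ≤ A * ts + ∫ s in (0:ℝ)..ts, k s * φ s :=
      h ts ⟨hts_Icc.1, hts_Icc.2.trans ht₀.2⟩
    have h2 : (∫ s in (0:ℝ)..ts, k s * φ s)
        ≤ ∫ s in (0:ℝ)..ts, k s * (c * Real.exp (K s)) :=
      intervalIntegral.integral_mono_ae_restrict hts_Icc.1 hkφ hkcK hae
    have h3 : (∫ s in (0:ℝ)..ts, k s * (c * Real.exp (K s)))
        = c * ∫ s in (0:ℝ)..ts, k s * Real.exp (K s) := by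
      rw [← intervalIntegral.integral_const_mul]
      exact intervalIntegral.integral_congr fun s _ => by ring
    have h4 : (∫ s in (0:ℝ)..ts, k s * Real.exp (K s)) ≤ Real.exp (K ts) - 1 :=
      expKey hk_nn hk_int hts_Icc.1
    have h5 : A * ts ≤ A * t₀ := mul_le_mul_of_nonneg_left hts_Icc.2 hA
    nlinarith [Real.exp_pos (K ts)]
  -- conclude
  refine le_of_forall_pos_le_add fun δ hδ => ?_
  have hexp_pos : 0 < Real.exp (K t₀) := Real.exp_pos _
  have h1 := hsuff (δ / Real.exp (K t₀)) (div_pos hδ hexp_pos)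
  calc φ t₀ ≤ (A * t₀ + δ / Real.exp (K t₀)) * Real.exp (K t₀) := h1
  _ = A * t₀ * Real.exp (K t₀) + δ := by field_simp

/-- Stability of agent trajectories with respect to the driving density field
(estimate (3.5) of Lemma 3.5). -/
theorem stmt_2 (T : ℝ) (hT : 0 < T) (L_f : ℝ) (hLf : 0 ≤ L_f)
    (f : ℝ → ℝ) (hf : ∀ a b : ℝ, |f a - f b| ≤ L_f * |a - b|)
    (u : ℝ → EuclideanSpace ℝ (Fin 2)) (hu_meas : Measurable u)
    (hu : ∀ᵐ t ∂(volume.restrict (Icc (0:ℝ) T)), ‖u t‖ ≤ 1)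
    (ρ₁ ρ₂ : ℝ → EuclideanSpace ℝ (Fin 2) → ℝ)
    (hρ₁_meas : Measurable (Function.uncurry ρ₁))
    (hρ₂_meas : Measurable (Function.uncurry ρ₂))
    (M₁ M₂ : ℝ) (hρ₁_bdd : ∀ t y, |ρ₁ t y| ≤ M₁) (hρ₂_bdd : ∀ t y, |ρ₂ t y| ≤ M₂)
    (C : ℝ → ℝ) (hC_nonneg : ∀ t, 0 ≤ C t) (hC_int : IntegrableOn C (Icc 0 T))
    (hρ₁_lip : ∀ᵐ t ∂(volume.restrict (Icc (0:ℝ) T)),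
      ∀ y z : EuclideanSpace ℝ (Fin 2), |ρ₁ t y - ρ₁ t z| ≤ C t * ‖y - z‖)
    (x₀ : EuclideanSpace ℝ (Fin 2)) (x₁ x₂ : ℝ → EuclideanSpace ℝ (Fin 2))
    (hx₁_int : IntervalIntegrable (fun s => f (ρ₁ s (x₁ s)) • u s) volume 0 T)
    (hx₂_int : IntervalIntegrable (fun s => f (ρ₂ s (x₂ s)) • u s) volume 0 T)
    (hx₁ : ∀ t ∈ Icc (0:ℝ) T, x₁ t = x₀ + ∫ s in (0:ℝ)..t, f (ρ₁ s (x₁ s)) • u s)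
    (hx₂ : ∀ t ∈ Icc (0:ℝ) T, x₂ t = x₀ + ∫ s in (0:ℝ)..t, f (ρ₂ s (x₂ s)) • u s) :
    ∀ t ∈ Icc (0:ℝ) T,
      ‖x₁ t - x₂ t‖ ≤
        L_f * t * (⨆ s : Icc (0:ℝ) T, ⨆ y : EuclideanSpace ℝ (Fin 2),
            |ρ₁ (s : ℝ) y - ρ₂ (s : ℝ) y|) *
          Real.exp (L_f * ∫ s in (0:ℝ)..t, C s) := by
  set D : ℝ := ⨆ s : Icc (0:ℝ) T, ⨆ y : EuclideanSpace ℝ (Fin 2),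
      |ρ₁ (s : ℝ) y - ρ₂ (s : ℝ) y| with hD
  -- bound on the sup
  have hM : ∀ (s : ℝ) (y : EuclideanSpace ℝ (Fin 2)), |ρ₁ s y - ρ₂ s y| ≤ M₁ + M₂ := by
    intro s y
    have h1 := abs_le.mp (hρ₁_bdd s y)
    have h2 := abs_le.mp (hρ₂_bdd s y)
    exact abs_le.mpr ⟨by linarith, by linarith⟩
  have hD_bound : ∀ s ∈ Icc (0:ℝ) T, ∀ y, |ρ₁ s y - ρ₂ s y| ≤ D := by
    intro s hs y
    have hinner : ∀ r : Icc (0:ℝ) T,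
        (⨆ y : EuclideanSpace ℝ (Fin 2), |ρ₁ (r:ℝ) y - ρ₂ (r:ℝ) y|) ≤ M₁ + M₂ :=
      fun r => ciSup_le fun y => hM r y
    have h1 : |ρ₁ s y - ρ₂ s y| ≤ ⨆ y : EuclideanSpace ℝ (Fin 2), |ρ₁ s y - ρ₂ s y| :=
      le_ciSup ⟨M₁ + M₂, forall_mem_range.mpr fun y => hM s y⟩ y
    refine h1.trans ?_
    exact le_ciSup (f := fun r : Icc (0:ℝ) T =>
        ⨆ y : EuclideanSpace ℝ (Fin 2), |ρ₁ (r:ℝ) y - ρ₂ (r:ℝ) y|)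
      ⟨M₁ + M₂, forall_mem_range.mpr hinner⟩ (⟨s, hs⟩ : Icc (0:ℝ) T)
  have hD_nn : 0 ≤ D := (abs_nonneg _).trans (hD_bound 0 ⟨le_refl 0, hT.le⟩ 0)
  -- continuity of trajectories
  have hx₁_cont : ContinuousOn x₁ (Icc 0 T) := by
    have h1 : ContinuousOn (fun t => x₀ + ∫ s in (0:ℝ)..t, f (ρ₁ s (x₁ s)) • u s)
        (Icc 0 T) := by
      refine continuousOn_const.add ?_
      have := intervalIntegral.continuousOn_primitive_interval'
        (μ := volume) hx₁_int (left_mem_uIcc)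
      rwa [uIcc_of_le hT.le] at this
    exact ContinuousOn.congr h1 hx₁
  have hx₂_cont : ContinuousOn x₂ (Icc 0 T) := by
    have h1 : ContinuousOn (fun t => x₀ + ∫ s in (0:ℝ)..t, f (ρ₂ s (x₂ s)) • u s)
        (Icc 0 T) := by
      refine continuousOn_const.add ?_
      have := intervalIntegral.continuousOn_primitive_interval'
        (μ := volume) hx₂_int (left_mem_uIcc)
      rwa [uIcc_of_le hT.le] at this
    exact ContinuousOn.congr h1 hx₂
  set φ : ℝ → ℝ := fun s => ‖x₁ s - x₂ s‖ with hφ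
  have hφ_cont : ContinuousOn φ (Icc 0 T) := (hx₁_cont.sub hx₂_cont).norm
  have hφ_nn : ∀ s, 0 ≤ φ s := fun s => norm_nonneg _
  obtain ⟨Cb, hCb⟩ := isCompact_Icc.exists_bound_of_continuousOn hφ_cont
  -- the global kernel
  set kk : ℝ → ℝ := (Icc (0:ℝ) T).indicator (fun s => L_f * C s) with hkk
  have hkk_nn : ∀ s, 0 ≤ kk s :=
    fun s => indicator_nonneg (fun r _ => mul_nonneg hLf (hC_nonneg r)) s
  have hkk_int : Integrable kk volume := by
    have h1 : IntegrableOn (fun s => L_f * C s) (Icc 0 T) volume := hC_int.const_mul L_f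
    exact h1.integrable_indicator measurableSet_Icc
  have hkk_eq : ∀ s ∈ Icc (0:ℝ) T, kk s = L_f * C s := fun s hs => indicator_of_mem hs _
  -- step inequality
  have hstep : ∀ r ∈ Icc (0:ℝ) T, φ r ≤ (L_f * D) * r + ∫ s in (0:ℝ)..r, kk s * φ s := by
    intro r hr
    have hsubIoc : Ioc (0:ℝ) r ⊆ Icc 0 T := fun x hx => ⟨hx.1.le, hx.2.trans hr.2⟩
    have hsubIcc : Icc (0:ℝ) r ⊆ Icc 0 T := Icc_subset_Icc_right hr.2
    have hmono : uIcc (0:ℝ) r ⊆ uIcc (0:ℝ) T := by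
      rw [uIcc_of_le hr.1, uIcc_of_le hT.le]; exact hsubIcc
    have hF₁r : IntervalIntegrable (fun s => f (ρ₁ s (x₁ s)) • u s) volume 0 r :=
      hx₁_int.mono_set hmono
    have hF₂r : IntervalIntegrable (fun s => f (ρ₂ s (x₂ s)) • u s) volume 0 r :=
      hx₂_int.mono_set hmono
    have hdiff : x₁ r - x₂ r
        = ∫ s in (0:ℝ)..r, (f (ρ₁ s (x₁ s)) • u s - f (ρ₂ s (x₂ s)) • u s) := by
      rw [hx₁ r hr, hx₂ r hr, intervalIntegral.integral_sub hF₁r hF₂r]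
      abel
    -- integrability of the dominating function
    have hCr_int : IntegrableOn C (Ioc 0 r) volume := hC_int.mono_set hsubIoc
    have hCφ : IntervalIntegrable (fun s => C s * φ s) volume 0 r := by
      rw [intervalIntegrable_iff_integrableOn_Ioc_of_le hr.1]
      have h1 : IntegrableOn (fun s => φ s * C s) (Ioc 0 r) volume :=
        Integrable.bdd_mul hCr_int
          ((hφ_cont.mono (Ioc_subset_Icc_self.trans hsubIcc)).aestronglyMeasurable
            measurableSet_Ioc)
          ((ae_restrict_mem measurableSet_Ioc).mono fun x hx =>
            hCb x (Ioc_subset_Icc_self.trans hsubIcc hx))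
      exact h1.congr (Filter.Eventually.of_forall fun x => mul_comm _ _)
    have hg₀_int : IntervalIntegrable (fun s => L_f * (C s * φ s + D)) volume 0 r :=
      (hCφ.add intervalIntegrable_const).const_mul L_f
    -- a.e. norm bound
    have hae : ∀ᵐ s ∂volume.restrict (Set.uIoc (0:ℝ) r),
        ‖f (ρ₁ s (x₁ s)) • u s - f (ρ₂ s (x₂ s)) • u s‖ ≤ L_f * (C s * φ s + D) := by
      rw [uIoc_of_le hr.1]
      have hu' := ae_restrict_of_ae_restrict_of_subset hsubIoc hu
      have hlip' := ae_restrict_of_ae_restrict_of_subset hsubIoc hρ₁_lip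
      filter_upwards [hu', hlip', ae_restrict_mem measurableSet_Ioc] with s hus hlips hmem
      have h1 : f (ρ₁ s (x₁ s)) • u s - f (ρ₂ s (x₂ s)) • u s
          = (f (ρ₁ s (x₁ s)) - f (ρ₂ s (x₂ s))) • u s := by rw [sub_smul]
      rw [h1, norm_smul, Real.norm_eq_abs]
      have h2 : |f (ρ₁ s (x₁ s)) - f (ρ₂ s (x₂ s))|
          ≤ L_f * |ρ₁ s (x₁ s) - ρ₂ s (x₂ s)| := hf _ _
      have h3 : |ρ₁ s (x₁ s) - ρ₂ s (x₂ s)|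
          ≤ |ρ₁ s (x₁ s) - ρ₁ s (x₂ s)| + |ρ₁ s (x₂ s) - ρ₂ s (x₂ s)| :=
        abs_sub_le _ _ _
      have h4 : |ρ₁ s (x₁ s) - ρ₁ s (x₂ s)| ≤ C s * φ s := hlips (x₁ s) (x₂ s)
      have h5 : |ρ₁ s (x₂ s) - ρ₂ s (x₂ s)| ≤ D := hD_bound s (hsubIoc hmem) (x₂ s)
      have h6 : |f (ρ₁ s (x₁ s)) - f (ρ₂ s (x₂ s))| * ‖u s‖
          ≤ |f (ρ₁ s (x₁ s)) - f (ρ₂ s (x₂ s))| := by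
        nlinarith [abs_nonneg (f (ρ₁ s (x₁ s)) - f (ρ₂ s (x₂ s))), norm_nonneg (u s)]
      have h7 : L_f * |ρ₁ s (x₁ s) - ρ₂ s (x₂ s)| ≤ L_f * (C s * φ s + D) := by
        nlinarith
      linarith
    -- the norm bound
    have hg₀_nn : 0 ≤ ∫ s in (0:ℝ)..r, L_f * (C s * φ s + D) :=
      intervalIntegral.integral_nonneg hr.1 fun s _ =>
        mul_nonneg hLf (add_nonneg (mul_nonneg (hC_nonneg s) (hφ_nn s)) hD_nn)
    have hnorm : φ r ≤ ∫ s in (0:ℝ)..r, L_f * (C s * φ s + D) := by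
      have h1 := intervalIntegral.norm_integral_le_abs_of_norm_le hae hg₀_int
      rw [abs_of_nonneg hg₀_nn] at h1
      calc φ r = ‖x₁ r - x₂ r‖ := rfl
      _ = ‖∫ s in (0:ℝ)..r, (f (ρ₁ s (x₁ s)) • u s - f (ρ₂ s (x₂ s)) • u s)‖ := by
          rw [hdiff]
      _ ≤ _ := h1
    -- rearrange
    have hsplit : ∫ s in (0:ℝ)..r, L_f * (C s * φ s + D)
        = L_f * ((∫ s in (0:ℝ)..r, C s * φ s) + (r - 0) * D) := by
      rw [intervalIntegral.integral_const_mul,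
        intervalIntegral.integral_add hCφ intervalIntegrable_const,
        intervalIntegral.integral_const, smul_eq_mul]
    have hkkφ : ∫ s in (0:ℝ)..r, kk s * φ s = L_f * ∫ s in (0:ℝ)..r, C s * φ s := by
      rw [← intervalIntegral.integral_const_mul]
      refine intervalIntegral.integral_congr fun s hs => ?_
      have hs' : s ∈ Icc (0:ℝ) T := by
        rw [uIcc_of_le hr.1] at hs; exact hsubIcc hs
      rw [hkk_eq s hs']; ring
    rw [hkkφ]
    rw [hsplit] at hnorm
    nlinarith [hnorm]
  -- apply Gronwall
  intro t htm
  have hmain := gronwall hkk_nn hkk_int hφ_cont (mul_nonneg hLf hD_nn) hstep t htm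
  have hKt : ∫ s in (0:ℝ)..t, kk s = L_f * ∫ s in (0:ℝ)..t, C s := by
    rw [← intervalIntegral.integral_const_mul]
    refine intervalIntegral.integral_congr fun s hs => ?_
    have hs' : s ∈ Icc (0:ℝ) T := by
      rw [uIcc_of_le htm.1] at hs; exact Icc_subset_Icc_right htm.2 hs
    exact hkk_eq s hs'
  rw [hKt] at hmain
  calc ‖x₁ t - x₂ t‖ = φ t := rfl
  _ ≤ L_f * D * t * Real.exp (L_f * ∫ s in (0:ℝ)..t, C s) := hmain
  _ = L_f * t * D * Real.exp (L_f * ∫ s in (0:ℝ)..t, C s) := by ring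
end

section
/- Let T > 0, let f : ℝ → ℝ be Lipschitz with constant L_f, and let u : [0,T] → ℝ² be measurable with |u(t)| ≤ 1 for a.e. t. Let ρ, ρ_n : [0,T] × ℝ² → ℝ (n ∈ ℕ) be bounded measurable functions such that for a.e. s the map x ↦ ρ(s,x) is Lipschitz with constant C(s), C : [0,T] → [0,∞) integrable, and suppose ∫₀ᵀ sup_{y∈ℝ²} |ρ(s,y) − ρ_n(s,y)| ds → 0 as n → ∞. Let x, x_n : [0,T] → ℝ² satisfy x(t) = x₀ + ∫₀ᵗ f(ρ(s,x(s))) u(s) ds and x_n(t) = x₀ + ∫₀ᵗ f(ρ_n(s,x_n(s))) u(s) ds for all t ∈ [0,T]. Then x_n converges to x uniformly on [0,T]. -/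
open MeasureTheory Set Filter
open scoped ENNReal NNReal

theorem analyticSet_nullMeasurableSet {A : Set ℝ} (hA : MeasureTheory.AnalyticSet A)
    (μ : Measure ℝ) [IsFiniteMeasure μ] : NullMeasurableSet A μ := by
  rw [MeasureTheory.AnalyticSet_def] at hA
  rcases hA with rfl | ⟨f, f_cont, rfl⟩
  · exact MeasurableSet.empty.nullMeasurableSet
  set A := range f with hA
  -- inner approximation by compact subsets
  have key : ∀ ε : ℝ≥0∞, 0 < ε → ∃ K : Set ℝ, IsCompact K ∧ K ⊆ A ∧ μ A ≤ μ K + ε := by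
    intro ε hε
    set δ : ℕ → ℝ≥0∞ := fun k => ε * 2⁻¹ ^ (k + 1) with hδ
    have hδpos : ∀ k, 0 < δ k := fun k =>
      ENNReal.mul_pos hε.ne' (pow_ne_zero _ (ENNReal.inv_ne_zero.2 ENNReal.ofNat_ne_top))
    set Sig : (ℕ → ℕ) → ℕ → Set (ℕ → ℕ) := fun b k => {σ | ∀ i < k, σ i ≤ b i} with hSig
    set Fs : (ℕ → ℕ) → ℕ → Set ℝ := fun b k => f '' Sig b k with hFs
    -- one-step choice
    have onestep : ∀ (b : ℕ → ℕ) (k : ℕ), ∃ j : ℕ,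
        μ (Fs b k) ≤ μ (f '' (Sig b k ∩ {σ | σ k ≤ j})) + δ k := by
      intro b k
      have hmono : Monotone fun j : ℕ => f '' (Sig b k ∩ {σ | σ k ≤ j}) := by
        intro i j hij
        exact image_mono (inter_subset_inter_right _ fun σ hσ => le_trans hσ hij)
      have hsets : (⋃ j : ℕ, (Sig b k ∩ {σ | σ k ≤ j})) = Sig b k := by
        apply Subset.antisymm
        · exact iUnion_subset fun j => inter_subset_left
        · intro σ hσ
          exact mem_iUnion.2 ⟨σ k, ⟨hσ, show σ k ≤ σ k from le_rfl⟩⟩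
      have hun : (⋃ j : ℕ, f '' (Sig b k ∩ {σ | σ k ≤ j})) = Fs b k := by
        show _ = f '' Sig b k
        rw [← image_iUnion, hsets]
      have hsup : μ (Fs b k) = ⨆ j : ℕ, μ (f '' (Sig b k ∩ {σ | σ k ≤ j})) := by
        rw [← hun, hmono.measure_iUnion]
      rcases eq_or_ne (μ (Fs b k)) 0 with h0 | h0
      · exact ⟨0, by simp [h0]⟩
      have hfin : μ (Fs b k) ≠ ∞ := measure_ne_top μ _
      have hlt : μ (Fs b k) - δ k < μ (Fs b k) := ENNReal.sub_lt_self hfin h0 (hδpos k).ne'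
      rw [hsup] at hlt
      obtain ⟨j, hj⟩ := lt_iSup_iff.1 hlt
      rw [← hsup] at hj
      refine ⟨j, ?_⟩
      rcases le_total (δ k) (μ (Fs b k)) with hle | hle
      · calc μ (Fs b k) = μ (Fs b k) - δ k + δ k := (tsub_add_cancel_of_le hle).symm
          _ ≤ μ (f '' (Sig b k ∩ {σ | σ k ≤ j})) + δ k := add_le_add_left hj.le _
      · exact le_trans hle le_add_self
    choose c hc using onestep
    -- recursive construction of the bounds
    set bb : ℕ → ℕ → ℕ :=
      fun k => Nat.rec (fun _ => 0) (fun k b => Function.update b k (c b k)) k with hbb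
    set ν : ℕ → ℕ := fun k => bb (k + 1) k with hν
    have hupd : ∀ k, bb (k + 1) = Function.update (bb k) k (c (bb k) k) := fun k => rfl
    have hprefix : ∀ m k, k < m → bb m k = ν k := by
      intro m
      induction m with
      | zero => intro k hk; omega
      | succ m ih =>
        intro k hk
        rcases eq_or_lt_of_le (Nat.lt_succ_iff.1 hk) with rfl | hk'
        · rfl
        · rw [hupd m, Function.update_of_ne (by omega), ih k hk']
    have hSigeq : ∀ k, Sig ν k = Sig (bb k) k := by
      intro k
      ext σ
      simp only [hSig, mem_setOf_eq]
      constructor <;> intro h i hi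
      · rw [hprefix k i hi]; exact h i hi
      · rw [← hprefix k i hi]; exact h i hi
    have hνk : ∀ k, ν k = c (bb k) k := by
      intro k
      rw [hν]
      show bb (k+1) k = _
      rw [hupd k, Function.update_self]
    have hSigstep : ∀ k, Sig ν (k + 1) = Sig (bb k) k ∩ {σ | σ k ≤ c (bb k) k} := by
      intro k
      rw [← hSigeq k]
      ext σ
      simp only [hSig, mem_setOf_eq, mem_inter_iff]
      constructor
      · intro h
        exact ⟨fun i hi => h i (by omega), by rw [← hνk k]; exact h k (by omega)⟩
      · rintro ⟨h1, h2⟩ i hi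
        rcases Nat.lt_succ_iff_lt_or_eq.1 hi with hi' | rfl
        · exact h1 i hi'
        · rw [hνk i]; exact h2
    -- the invariant
    have hinv : ∀ k, μ A ≤ μ (Fs ν k) + ∑ i ∈ Finset.range k, δ i := by
      intro k
      induction k with
      | zero =>
        have h0 : Fs ν 0 = A := by
          have huniv : Sig ν 0 = univ := eq_univ_iff_forall.2 fun σ i hi => by omega
          show f '' Sig ν 0 = A
          rw [huniv, image_univ, hA]
        simp [h0]
      | succ k ih =>
        have step : μ (Fs ν k) ≤ μ (Fs ν (k + 1)) + δ k := by
          have h1 : Fs ν (k + 1) = f '' (Sig (bb k) k ∩ {σ | σ k ≤ c (bb k) k}) := by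
            show f '' Sig ν (k + 1) = _
            rw [hSigstep k]
          have h2 : Fs ν k = Fs (bb k) k := by
            show f '' Sig ν k = f '' Sig (bb k) k
            rw [hSigeq k]
          rw [h1, h2]
          exact hc (bb k) k
        calc μ A ≤ μ (Fs ν k) + ∑ i ∈ Finset.range k, δ i := ih
          _ ≤ (μ (Fs ν (k + 1)) + δ k) + ∑ i ∈ Finset.range k, δ i := add_le_add_left step _
          _ = μ (Fs ν (k + 1)) + ∑ i ∈ Finset.range (k + 1), δ i := by
              rw [Finset.sum_range_succ]; ring
    have hsumle : ∀ k, (∑ i ∈ Finset.range k, δ i) ≤ ε := by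
      intro k
      calc (∑ i ∈ Finset.range k, δ i) ≤ ∑' i : ℕ, δ i := ENNReal.sum_le_tsum _
        _ = ε * ∑' i : ℕ, 2⁻¹ ^ (i + 1) := ENNReal.tsum_mul_left
        _ ≤ ε * 1 := by
            apply mul_le_mul_right
            have h2 : (∑' i : ℕ, (2⁻¹ : ℝ≥0∞) ^ (i + 1)) = 2⁻¹ * ∑' i : ℕ, 2⁻¹ ^ i := by
              rw [← ENNReal.tsum_mul_left]
              congr 1; ext i; rw [pow_succ, mul_comm]
            rw [h2, ENNReal.tsum_geometric, ENNReal.one_sub_inv_two, inv_inv]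
            exact le_of_eq (ENNReal.inv_mul_cancel two_ne_zero ENNReal.ofNat_ne_top)
        _ = ε := mul_one ε
    -- the compact set
    set L : Set (ℕ → ℕ) := univ.pi fun i => Iic (ν i) with hL
    have hLcomp : IsCompact L := isCompact_univ_pi fun i => (finite_Iic (ν i)).isCompact
    set K : Set ℝ := f '' L with hK
    have hKcomp : IsCompact K := hLcomp.image f_cont
    have hKA : K ⊆ A := by rw [hK, hA]; exact image_subset_range f L
    -- the intersection of closures is inside K
    have hinter : (⋂ k, closure (Fs ν k)) ⊆ K := by
      intro x hx
      simp only [mem_iInter] at hx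
      have hsel : ∀ k : ℕ, ∃ σ : ℕ → ℕ, σ ∈ Sig ν k ∧ dist x (f σ) < 1 / (k + 1) := by
        intro k
        have hxk := hx k
        rw [Metric.mem_closure_iff] at hxk
        obtain ⟨y, hy, hd⟩ := hxk (1 / (k + 1)) (by positivity)
        obtain ⟨σ, hσ, rfl⟩ := hy
        exact ⟨σ, hσ, hd⟩
      choose σ hσmem hσdist using hsel
      set B : ℕ → ℕ := fun i => max (ν i) ((Finset.range (i + 1)).sup fun k => σ k i) with hB
      set E : Set (ℕ → ℕ) := univ.pi fun i => Iic (B i) with hE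
      have hEcomp : IsCompact E := isCompact_univ_pi fun i => (finite_Iic (B i)).isCompact
      have hσE : ∀ k, σ k ∈ E := by
        intro k
        rw [hE, mem_univ_pi]
        intro i
        rcases lt_or_ge i k with hik | hik
        · exact le_trans (hσmem k i hik) (le_max_left _ _)
        · calc σ k i ≤ (Finset.range (i + 1)).sup fun k => σ k i :=
              Finset.le_sup (f := fun k => σ k i) (Finset.mem_range.2 (Nat.lt_succ_of_le hik))
            _ ≤ B i := le_max_right _ _
      obtain ⟨σs, hσsE, φ, hφmono, hφtend⟩ := hEcomp.tendsto_subseq hσE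
      have hσsL : σs ∈ L := by
        rw [hL, mem_univ_pi]
        intro i
        have hcoord : Tendsto (fun k => σ (φ k) i) atTop (nhds (σs i)) :=
          ((continuous_apply i).continuousAt.tendsto).comp hφtend
        have hev : ∀ᶠ k in atTop, σ (φ k) i = σs i := by
          have hmem : ({σs i} : Set ℕ) ∈ nhds (σs i) := by
            rw [nhds_discrete]; exact mem_pure.2 (mem_singleton _)
          filter_upwards [hcoord hmem] with k hk using hk
        have hev2 : ∀ᶠ k in atTop, i < φ k :=
          eventually_atTop.2 ⟨i + 1, fun k hk =>
            lt_of_lt_of_le (Nat.lt_of_lt_of_le (Nat.lt_succ_self i) hk) hφmono.le_apply⟩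
        obtain ⟨k, hk1, hk2⟩ := (hev.and hev2).exists
        rw [← hk1]
        exact hσmem (φ k) i hk2
      have h1 : Tendsto (fun k => f (σ (φ k))) atTop (nhds (f σs)) :=
        (f_cont.tendsto σs).comp hφtend
      have h2 : Tendsto (fun k => f (σ (φ k))) atTop (nhds x) := by
        rw [tendsto_iff_dist_tendsto_zero]
        apply squeeze_zero (fun k => dist_nonneg) (g := fun k : ℕ => 1 / ((k : ℝ) + 1))
        · intro k
          rw [dist_comm]
          refine le_trans (hσdist (φ k)).le ?_
          apply one_div_le_one_div_of_le (by positivity)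
          have hk : (k : ℝ) ≤ (φ k : ℝ) := Nat.cast_le.2 hφmono.le_apply
          linarith
        · exact tendsto_one_div_add_atTop_nhds_zero_nat
      exact ⟨σs, hσsL, tendsto_nhds_unique h1 h2⟩
    -- measure estimate
    have hFcl : ∀ k, μ A ≤ μ (closure (Fs ν k)) + ε := fun k =>
      (hinv k).trans (add_le_add (measure_mono subset_closure) (hsumle k))
    have hanti : Antitone fun k => closure (Fs ν k) := by
      intro i j hij
      apply closure_mono
      apply image_mono
      intro τ hτ l hl
      exact hτ l (lt_of_lt_of_le hl hij)
    have hmeasInter : μ (⋂ k, closure (Fs ν k)) = ⨅ k, μ (closure (Fs ν k)) :=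
      hanti.measure_iInter (fun k => isClosed_closure.measurableSet.nullMeasurableSet)
        ⟨0, measure_ne_top μ _⟩
    refine ⟨K, hKcomp, hKA, ?_⟩
    calc μ A ≤ ⨅ k, (μ (closure (Fs ν k)) + ε) := le_iInf hFcl
      _ = (⨅ k, μ (closure (Fs ν k))) + ε := by
          rw [ENNReal.iInf_add]
      _ = μ (⋂ k, closure (Fs ν k)) + ε := by rw [hmeasInter]
      _ ≤ μ K + ε := add_le_add_left (measure_mono hinter) _
  -- conclude null measurability
  have hKk : ∀ k : ℕ, ∃ K : Set ℝ, IsCompact K ∧ K ⊆ A ∧ μ A ≤ μ K + ((k : ℝ≥0∞) + 1)⁻¹ := by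
    intro k
    apply key
    exact ENNReal.inv_pos.2 (by simp [ENNReal.add_eq_top])
  choose Kk hKkcomp hKkA hKkμ using hKk
  set G : Set ℝ := ⋃ k, Kk k with hG
  have hGmeas : MeasurableSet G :=
    MeasurableSet.iUnion fun k => (hKkcomp k).isClosed.measurableSet
  have hGA : G ⊆ A := iUnion_subset hKkA
  have hμAG : μ A ≤ μ G := by
    have h1 : μ A ≤ ⨅ k : ℕ, (μ G + ((k : ℝ≥0∞) + 1)⁻¹) :=
      le_iInf fun k => (hKkμ k).trans
        (add_le_add_left (measure_mono (subset_iUnion _ k)) _)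
    have h2 : (⨅ k : ℕ, (μ G + ((k : ℝ≥0∞) + 1)⁻¹)) = μ G + ⨅ k : ℕ, ((k : ℝ≥0∞) + 1)⁻¹ := by
      rw [ENNReal.add_iInf]
    have h3 : (⨅ k : ℕ, ((k : ℝ≥0∞) + 1)⁻¹) = 0 := by
      rw [← ENNReal.bot_eq_zero, iInf_eq_bot]
      intro b hb
      obtain ⟨n, hn⟩ := ENNReal.exists_inv_nat_lt (by exact hb.ne' : b ≠ 0)
      exact ⟨n, lt_of_le_of_lt (ENNReal.inv_le_inv.2 (by
        exact le_add_of_nonneg_right zero_le)) hn⟩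
    rw [h2, h3, add_zero] at h1
    exact h1
  have hnull : μ (A \ G) = 0 := by
    have hsub : A \ G ⊆ toMeasurable μ A \ G :=
      diff_subset_diff_left (subset_toMeasurable μ A)
    have : μ (toMeasurable μ A \ G) = μ (toMeasurable μ A) - μ G :=
      measure_diff (hGA.trans (subset_toMeasurable μ A)) hGmeas.nullMeasurableSet
        (measure_ne_top μ G)
    have hz : μ (toMeasurable μ A \ G) = 0 := by
      rw [this, measure_toMeasurable]
      exact tsub_eq_zero_of_le hμAG
    exact le_antisymm (le_trans (measure_mono hsub) hz.le) zero_le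
  have : G ∪ (A \ G) = A := union_diff_cancel hGA
  rw [← this]
  exact hGmeas.nullMeasurableSet.union (NullMeasurableSet.of_null hnull)



/-- The pointwise supremum in the second variable of a bounded jointly-measurable function
is a.e. measurable with respect to any finite measure (measurable projection theorem). -/
theorem aemeasurable_iSup_of_measurable
    {g : ℝ × EuclideanSpace ℝ (Fin 2) → ℝ} (hg : Measurable g)
    (c : ℝ) (hc : ∀ p, g p ≤ c)
    (μ : Measure ℝ) [IsFiniteMeasure μ] :
    AEMeasurable (fun s => ⨆ y : EuclideanSpace ℝ (Fin 2), g (s, y)) μ := by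
  set D : ℝ → ℝ := fun s => ⨆ y : EuclideanSpace ℝ (Fin 2), g (s, y) with hD
  have hbdd : ∀ s : ℝ, BddAbove (range fun y : EuclideanSpace ℝ (Fin 2) => g (s, y)) :=
    fun s => ⟨c, by rintro _ ⟨y, rfl⟩; exact hc (s, y)⟩
  have key : ∀ a : ℝ, NullMeasurableSet (D ⁻¹' Ioi a) μ := by
    intro a
    have himg : D ⁻¹' Ioi a = Prod.fst '' {p : ℝ × EuclideanSpace ℝ (Fin 2) | a < g p} := by
      ext s
      simp only [mem_preimage, mem_Ioi, mem_image, mem_setOf_eq]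
      constructor
      · intro h
        rw [hD] at h
        obtain ⟨y, hy⟩ := (lt_ciSup_iff (hbdd s)).1 h
        exact ⟨(s, y), hy, rfl⟩
      · rintro ⟨⟨s', y⟩, h, rfl⟩
        exact lt_of_lt_of_le h (le_ciSup (hbdd s') y)
    rw [himg]
    have hmeas : MeasurableSet {p : ℝ × EuclideanSpace ℝ (Fin 2) | a < g p} :=
      measurableSet_lt measurable_const hg
    exact analyticSet_nullMeasurableSet (hmeas.analyticSet.image_of_continuous continuous_fst) μ
  have hnm : NullMeasurable D μ := by
    have hgen : Real.measurableSpace = MeasurableSpace.generateFrom (range Ioi) :=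
      borel_eq_generateFrom_Ioi ℝ
    have hmg : @Measurable (NullMeasurableSpace ℝ μ) ℝ inferInstance
        (MeasurableSpace.generateFrom (range Ioi)) D := by
      apply measurable_generateFrom
      rintro _ ⟨a, rfl⟩
      exact key a
    intro s hs
    rw [hgen] at hs
    exact hmg hs
  exact hnm.aemeasurable


/-- An integral form of Grönwall's inequality with integrable coefficient, proved by
a stepping argument: on any piece where `∫ K ≤ 1/4` the bound grows by a factor `4/3`. -/
theorem gronwall_int (T a : ℝ) (ha : 0 ≤ a) (K g : ℝ → ℝ)
    (hK0 : ∀ s, 0 ≤ K s) (hg0 : ∀ s, 0 ≤ g s)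
    (hKint : IntegrableOn K (Icc 0 T) volume)
    (hKg : IntegrableOn (fun s => K s * g s) (Icc 0 T) volume)
    (hle : ∀ t ∈ Icc (0:ℝ) T, g t ≤ a + ∫ s in Ioc 0 t, K s * g s) :
    ∀ (j : ℕ), ∀ t ∈ Icc (0:ℝ) T, (∫ s in Ioc 0 t, K s) ≤ j * (4:ℝ)⁻¹ →
      g t ≤ (4/3) ^ j * a := by
  set Φ : ℝ → ℝ := fun t => ∫ s in Ioc 0 t, K s with hΦ
  set ψ : ℝ → ℝ := fun t => a + ∫ s in Ioc 0 t, K s * g s with hψ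
  have hsubset : ∀ {u t : ℝ}, 0 ≤ u → t ≤ T → Ioc u t ⊆ Icc 0 T := fun hu htT =>
    fun s hs => ⟨le_trans hu hs.1.le, le_trans hs.2 htT⟩
  have hKg_sub : ∀ {u t : ℝ}, 0 ≤ u → t ≤ T →
      IntegrableOn (fun s => K s * g s) (Ioc u t) volume :=
    fun hu htT => hKg.mono_set (hsubset hu htT)
  have hK_sub : ∀ {u t : ℝ}, 0 ≤ u → t ≤ T → IntegrableOn K (Ioc u t) volume :=
    fun hu htT => hKint.mono_set (hsubset hu htT)
  have hψadd : ∀ {u t : ℝ}, 0 ≤ u → u ≤ t → t ≤ T →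
      ψ t = ψ u + ∫ s in Ioc u t, K s * g s := by
    intro u t hu hut htT
    have hsplit : Ioc (0:ℝ) u ∪ Ioc u t = Ioc 0 t := Ioc_union_Ioc_eq_Ioc hu hut
    have h1 : (∫ s in Ioc (0:ℝ) t, K s * g s)
        = (∫ s in Ioc (0:ℝ) u, K s * g s) + ∫ s in Ioc u t, K s * g s := by
      rw [← hsplit, setIntegral_union (Ioc_disjoint_Ioc_of_le le_rfl) measurableSet_Ioc
        (hKg_sub le_rfl (hut.trans htT)) (hKg_sub hu htT)]
    show a + _ = (a + _) + _
    rw [h1]; ring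
  have hΦadd : ∀ {u t : ℝ}, 0 ≤ u → u ≤ t → t ≤ T →
      Φ t = Φ u + ∫ s in Ioc u t, K s := by
    intro u t hu hut htT
    have hsplit : Ioc (0:ℝ) u ∪ Ioc u t = Ioc 0 t := Ioc_union_Ioc_eq_Ioc hu hut
    show (∫ s in Ioc (0:ℝ) t, K s) = _
    rw [← hsplit, setIntegral_union (Ioc_disjoint_Ioc_of_le le_rfl) measurableSet_Ioc
      (hK_sub le_rfl (hut.trans htT)) (hK_sub hu htT)]
  have hψmono : ∀ {u t : ℝ}, 0 ≤ u → u ≤ t → t ≤ T → ψ u ≤ ψ t := by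
    intro u t hu hut htT
    rw [hψadd hu hut htT]
    have h0 : 0 ≤ ∫ s in Ioc u t, K s * g s :=
      setIntegral_nonneg measurableSet_Ioc fun s _ => mul_nonneg (hK0 s) (hg0 s)
    linarith
  have hψnonneg : ∀ {t : ℝ}, 0 ≤ t → t ≤ T → 0 ≤ ψ t := by
    intro t ht htT
    have h0 : 0 ≤ ∫ s in Ioc (0:ℝ) t, K s * g s :=
      setIntegral_nonneg measurableSet_Ioc fun s _ => mul_nonneg (hK0 s) (hg0 s)
    show 0 ≤ a + _
    linarith
  have hgψ : ∀ t ∈ Icc (0:ℝ) T, g t ≤ ψ t := hle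
  have hΦcont : ContinuousOn Φ (Icc 0 T) := intervalIntegral.continuousOn_primitive hKint
  have hbound : ∀ {u t : ℝ}, 0 ≤ u → u ≤ t → t ≤ T →
      (∫ s in Ioc u t, K s * g s) ≤ ψ t * ∫ s in Ioc u t, K s := by
    intro u t hu hut htT
    have h1 : (∫ s in Ioc u t, K s * g s) ≤ ∫ s in Ioc u t, K s * ψ t :=
      setIntegral_mono_on (hKg_sub hu htT) ((hK_sub hu htT).mul_const _) measurableSet_Ioc
        (fun s hs => mul_le_mul_of_nonneg_left
          (le_trans (hgψ s (hsubset hu htT hs)) (hψmono (le_trans hu hs.1.le) hs.2 htT))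
          (hK0 s))
    calc (∫ s in Ioc u t, K s * g s) ≤ ∫ s in Ioc u t, K s * ψ t := h1
      _ = (∫ s in Ioc u t, K s) * ψ t := by rw [integral_mul_const]
      _ = ψ t * ∫ s in Ioc u t, K s := mul_comm _ _
  have hcore : ∀ {u t : ℝ}, 0 ≤ u → u ≤ t → t ≤ T → (∫ s in Ioc u t, K s) ≤ 4⁻¹ →
      ψ t ≤ (4 / 3) * ψ u := by
    intro u t hu hut htT hquarter
    have hb := hbound hu hut htT
    have hψt := hψnonneg (hu.trans hut) htT
    have h4 : ψ t * (∫ s in Ioc u t, K s) ≤ ψ t * 4⁻¹ :=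
      mul_le_mul_of_nonneg_left hquarter hψt
    have heq := hψadd hu hut htT
    have h5 : ψ t ≤ ψ u + ψ t * 4⁻¹ := by
      calc ψ t = ψ u + ∫ s in Ioc u t, K s * g s := heq
        _ ≤ ψ u + ψ t * ∫ s in Ioc u t, K s := by linarith
        _ ≤ ψ u + ψ t * 4⁻¹ := by linarith
    linarith
  have hΦzero : Φ 0 = 0 := by
    show (∫ s in Ioc (0:ℝ) 0, K s) = 0
    rw [Ioc_self, Measure.restrict_empty, integral_zero_measure]
  -- the main claim, proved for `ψ` by induction
  suffices hψclaim : ∀ (j : ℕ), ∀ t ∈ Icc (0:ℝ) T, Φ t ≤ j * (4:ℝ)⁻¹ →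
      ψ t ≤ (4/3) ^ j * a by
    intro j t ht hΦt
    exact (hgψ t ht).trans (hψclaim j t ht hΦt)
  intro j
  induction j with
  | zero =>
    intro t ht hΦt
    have hΦ0 : (0:ℝ) ≤ Φ t := setIntegral_nonneg measurableSet_Ioc fun s _ => hK0 s
    have hΦt0 : Φ t = 0 := le_antisymm (by simpa using hΦt) hΦ0
    have h2 : (∫ s in Ioc (0:ℝ) t, K s * g s) ≤ 0 := by
      have hbt := hbound (le_refl (0:ℝ)) ht.1 ht.2
      have hΦeq : (∫ s in Ioc (0:ℝ) t, K s) = 0 := hΦt0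
      rw [hΦeq, mul_zero] at hbt
      exact hbt
    have h3 : ψ t ≤ a := by
      have hrfl : ψ t = a + ∫ s in Ioc (0:ℝ) t, K s * g s := rfl
      linarith
    simpa using h3
  | succ j ih =>
    intro t ht hΦt
    set U : Set ℝ := Icc 0 t ∩ Φ ⁻¹' (Iic ((j:ℝ) * 4⁻¹)) with hU
    have hU0 : (0:ℝ) ∈ U := by
      refine ⟨⟨le_rfl, ht.1⟩, ?_⟩
      show Φ 0 ≤ _
      rw [hΦzero]
      positivity
    have hUclosed : IsClosed U :=
      (hΦcont.mono (Icc_subset_Icc le_rfl ht.2)).preimage_isClosed_of_isClosed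
        isClosed_Icc isClosed_Iic
    have hUbdd : BddAbove U := BddAbove.mono inter_subset_left bddAbove_Icc
    have huU : sSup U ∈ U := hUclosed.csSup_mem ⟨0, hU0⟩ hUbdd
    set u := sSup U with hu
    have hu0 : 0 ≤ u := huU.1.1
    have hut : u ≤ t := huU.1.2
    have hΦu : Φ u ≤ (j:ℝ) * 4⁻¹ := huU.2
    have huT : u ≤ T := hut.trans ht.2
    have hψu : ψ u ≤ (4/3) ^ j * a := ih u ⟨hu0, huT⟩ hΦu
    have hfactor : (4/3 : ℝ) * ((4/3) ^ j * a) = (4/3) ^ (j+1) * a := by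
      rw [pow_succ]; ring
    rcases eq_or_lt_of_le hut with heq | hult
    · rw [← heq]
      calc ψ u ≤ (4/3) ^ j * a := hψu
        _ ≤ (4/3) ^ (j+1) * a := by
            have hp : (0:ℝ) ≤ (4/3) ^ j := by positivity
            nlinarith
    · -- u < t; first, Φ u = j/4 exactly (≥ part)
      have hΦuge : (j:ℝ) * 4⁻¹ ≤ Φ u := by
        by_contra hlt
        push_neg at hlt
        haveI hne : (nhdsWithin u (Ioc u t)).NeBot := by
          rw [← mem_closure_iff_nhdsWithin_neBot, closure_Ioc hult.ne]
          exact ⟨le_rfl, hult.le⟩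
        have hmem : Φ ⁻¹' (Iio ((j:ℝ) * 4⁻¹)) ∈ nhdsWithin u (Icc 0 T) :=
          (hΦcont u ⟨hu0, huT⟩) (Iio_mem_nhds hlt)
        have hmem2 : Φ ⁻¹' (Iio ((j:ℝ) * 4⁻¹)) ∈ nhdsWithin u (Ioc u t) :=
          nhdsWithin_mono u (hsubset hu0 ht.2) hmem
        obtain ⟨s, hs1, hs2⟩ := (Filter.eventually_iff.2 hmem2).and
          (Filter.eventually_iff.2 self_mem_nhdsWithin) |>.exists
        have hsU : s ∈ U := ⟨⟨hu0.trans hs2.1.le, hs2.2⟩, show Φ s ≤ (j:ℝ) * 4⁻¹ from le_of_lt hs1⟩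
        exact absurd (le_csSup hUbdd hsU) (not_le.2 hs2.1)
      have hquarter : (∫ s in Ioc u t, K s) ≤ 4⁻¹ := by
        have hadd := hΦadd hu0 hut ht.2
        have : Φ t ≤ ((j:ℝ) + 1) * 4⁻¹ := by
          convert hΦt using 2
          push_cast
          ring
        linarith
      calc ψ t ≤ (4/3) * ψ u := hcore hu0 hut ht.2 hquarter
        _ ≤ (4/3) * ((4/3) ^ j * a) := by
            apply mul_le_mul_of_nonneg_left hψu (by norm_num)
        _ = (4/3) ^ (j+1) * a := hfactor



/-- Convergence of the regularized agent trajectories (Step 3 of the proof of Theorem 3.8):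
if the approximating densities `ρ_n` converge to `ρ` in an `L¹`-in-time, uniform-in-space
sense, then the corresponding trajectories converge uniformly on `[0,T]`. -/
theorem stmt_6 (T : ℝ) (hT : 0 < T) (L_f : ℝ) (hLf : 0 ≤ L_f)
    (f : ℝ → ℝ) (hf : ∀ a b : ℝ, |f a - f b| ≤ L_f * |a - b|)
    (u : ℝ → EuclideanSpace ℝ (Fin 2)) (hu_meas : Measurable u)
    (hu : ∀ᵐ t ∂(volume.restrict (Icc (0:ℝ) T)), ‖u t‖ ≤ 1)
    (ρ : ℝ → EuclideanSpace ℝ (Fin 2) → ℝ)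
    (ρn : ℕ → ℝ → EuclideanSpace ℝ (Fin 2) → ℝ)
    (hρ_meas : Measurable (Function.uncurry ρ))
    (hρn_meas : ∀ n, Measurable (Function.uncurry (ρn n)))
    (M : ℝ) (hρ_bdd : ∀ s y, |ρ s y| ≤ M) (hρn_bdd : ∀ n s y, |ρn n s y| ≤ M)
    (C : ℝ → ℝ) (hC_nonneg : ∀ s, 0 ≤ C s) (hC_int : IntegrableOn C (Icc 0 T))
    (hρ_lip : ∀ᵐ s ∂(volume.restrict (Icc (0:ℝ) T)),
      ∀ y z : EuclideanSpace ℝ (Fin 2), |ρ s y - ρ s z| ≤ C s * ‖y - z‖)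
    (hconv : Tendsto
      (fun n => ∫ s in (0:ℝ)..T, ⨆ y : EuclideanSpace ℝ (Fin 2), |ρ s y - ρn n s y|)
      atTop (nhds 0))
    (x₀ : EuclideanSpace ℝ (Fin 2))
    (x : ℝ → EuclideanSpace ℝ (Fin 2)) (xn : ℕ → ℝ → EuclideanSpace ℝ (Fin 2))
    (hx_int : IntervalIntegrable (fun s => f (ρ s (x s)) • u s) volume 0 T)
    (hxn_int : ∀ n, IntervalIntegrable (fun s => f (ρn n s (xn n s)) • u s) volume 0 T)
    (hx : ∀ t ∈ Icc (0:ℝ) T, x t = x₀ + ∫ s in (0:ℝ)..t, f (ρ s (x s)) • u s)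
    (hxn : ∀ n, ∀ t ∈ Icc (0:ℝ) T,
      xn n t = x₀ + ∫ s in (0:ℝ)..t, f (ρn n s (xn n s)) • u s) :
    TendstoUniformlyOn xn x atTop (Icc (0:ℝ) T) := by
  haveI hfinIoc : IsFiniteMeasure (volume.restrict (Ioc (0:ℝ) T)) :=
    ⟨by rw [Measure.restrict_apply_univ]; exact measure_Ioc_lt_top⟩
  have habs : ∀ a b : ℝ, |a - b| ≤ |a| + |b| := by
    intro a b
    calc |a - b| = |a + -b| := by rw [sub_eq_add_neg]
      _ ≤ |a| + |-b| := abs_add_le _ _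
      _ = |a| + |b| := by rw [abs_neg]
  set D : ℕ → ℝ → ℝ :=
    fun n s => ⨆ y : EuclideanSpace ℝ (Fin 2), |ρ s y - ρn n s y| with hDdef
  set h : ℕ → ℝ → ℝ := fun n s => |ρ s (xn n s) - ρn n s (xn n s)| with hhdef
  set K : ℝ → ℝ := fun s => L_f * C s with hKdef
  set g : ℕ → ℝ → ℝ := fun n t => ‖xn n t - x t‖ with hgdef
  have hK0 : ∀ s, 0 ≤ K s := fun s => mul_nonneg hLf (hC_nonneg s)
  have hKicc : IntegrableOn K (Icc 0 T) := hC_int.const_mul L_f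
  have hbddA : ∀ n s, BddAbove (range fun y : EuclideanSpace ℝ (Fin 2) => |ρ s y - ρn n s y|) := by
    intro n s
    refine ⟨M + M, ?_⟩
    rintro _ ⟨y, rfl⟩
    exact (habs _ _).trans (add_le_add (hρ_bdd s y) (hρn_bdd n s y))
  -- continuity of the trajectories
  have hcont_traj : ∀ (z : ℝ → EuclideanSpace ℝ (Fin 2))
      (F : ℝ → EuclideanSpace ℝ (Fin 2)),
      IntervalIntegrable F volume 0 T →
      (∀ t ∈ Icc (0:ℝ) T, z t = x₀ + ∫ s in (0:ℝ)..t, F s) →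
      ContinuousOn z (Icc 0 T) := by
    intro z F hFint hzeq
    have hFicc : IntegrableOn F (Icc 0 T) := by
      rw [← intervalIntegrable_iff_integrableOn_Icc_of_le hT.le]
      exact hFint
    have hprim : ContinuousOn (fun t => x₀ + ∫ s in Ioc (0:ℝ) t, F s) (Icc 0 T) :=
      continuousOn_const.add (intervalIntegral.continuousOn_primitive hFicc)
    apply hprim.congr
    intro t ht
    rw [hzeq t ht, intervalIntegral.integral_of_le ht.1]
  have hxcont : ContinuousOn x (Icc 0 T) := hcont_traj x _ hx_int hx
  have hxncont : ∀ n, ContinuousOn (xn n) (Icc 0 T) :=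
    fun n => hcont_traj (xn n) _ (hxn_int n) (hxn n)
  have hgcont : ∀ n, ContinuousOn (g n) (Icc 0 T) :=
    fun n => ((hxncont n).sub hxcont).norm
  have hg0 : ∀ n s, 0 ≤ g n s := fun n s => norm_nonneg _
  -- integrability of the pointwise deviation h n
  have hhae : ∀ n, AEMeasurable (h n) (volume.restrict (Ioc 0 T)) := by
    intro n
    have hxnae : AEMeasurable (xn n) (volume.restrict (Ioc 0 T)) :=
      ((hxncont n).aemeasurable measurableSet_Icc).mono_measure
        (Measure.restrict_mono Ioc_subset_Icc_self le_rfl)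
    have hpair : AEMeasurable (fun s => (s, xn n s)) (volume.restrict (Ioc 0 T)) :=
      aemeasurable_id.prodMk hxnae
    exact measurable_abs.comp_aemeasurable
      ((hρ_meas.comp_aemeasurable hpair).sub ((hρn_meas n).comp_aemeasurable hpair))
  have hhint : ∀ n, IntegrableOn (h n) (Ioc 0 T) := by
    intro n
    apply Integrable.mono' (integrable_const (M + M)) (hhae n).aestronglyMeasurable
    apply Eventually.of_forall
    intro s
    rw [Real.norm_eq_abs, abs_abs]
    exact (habs _ _).trans (add_le_add (hρ_bdd s _) (hρn_bdd n s _))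
  have hh0 : ∀ n s, 0 ≤ h n s := fun n s => abs_nonneg _
  have hhD : ∀ n s, h n s ≤ D n s := fun n s => le_ciSup (hbddA n s) (xn n s)
  have hD0 : ∀ n s, 0 ≤ D n s := fun n s => (hh0 n s).trans (hhD n s)
  -- integrability of D n (uses the measurable projection theorem)
  have hDae : ∀ n, AEMeasurable (D n) (volume.restrict (Ioc 0 T)) := fun n =>
    aemeasurable_iSup_of_measurable
      (g := fun p : ℝ × EuclideanSpace ℝ (Fin 2) => |ρ p.1 p.2 - ρn n p.1 p.2|)
      ((hρ_meas.sub (hρn_meas n)).abs) (M + M)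
      (fun p => (habs _ _).trans (add_le_add (hρ_bdd p.1 p.2) (hρn_bdd n p.1 p.2)))
      (volume.restrict (Ioc 0 T))
  have hDint : ∀ n, IntegrableOn (D n) (Ioc 0 T) := by
    intro n
    apply Integrable.mono' (integrable_const (M + M)) (hDae n).aestronglyMeasurable
    apply Eventually.of_forall
    intro s
    rw [Real.norm_eq_abs, abs_of_nonneg (hD0 n s)]
    exact ciSup_le fun y => (habs _ _).trans (add_le_add (hρ_bdd s y) (hρn_bdd n s y))
  -- integrability of K * g n
  have hKgint : ∀ n, IntegrableOn (fun s => K s * g n s) (Icc 0 T) := by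
    intro n
    obtain ⟨B, hB⟩ := isCompact_Icc.exists_bound_of_continuousOn (hgcont n)
    have hmeas : AEStronglyMeasurable (fun s => K s * g n s) (volume.restrict (Icc 0 T)) :=
      (hKicc.aemeasurable.mul ((hgcont n).aemeasurable measurableSet_Icc)).aestronglyMeasurable
    apply Integrable.mono' (hKicc.const_mul B) hmeas
    filter_upwards [ae_restrict_mem measurableSet_Icc] with s hs
    rw [Real.norm_eq_abs, abs_of_nonneg (mul_nonneg (hK0 s) (hg0 n s))]
    calc K s * g n s ≤ K s * B := by
          apply mul_le_mul_of_nonneg_left _ (hK0 s)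
          exact (le_abs_self _).trans ((Real.norm_eq_abs (g n s)) ▸ hB s hs)
      _ = B * K s := mul_comm _ _
  -- the a-priori integral inequality
  set a : ℕ → ℝ := fun n => L_f * ∫ s in Ioc (0:ℝ) T, h n s with hadef
  have ha0 : ∀ n, 0 ≤ a n := fun n =>
    mul_nonneg hLf (setIntegral_nonneg measurableSet_Ioc fun s _ => hh0 n s)
  have hkey : ∀ n, ∀ t ∈ Icc (0:ℝ) T, g n t ≤ a n + ∫ s in Ioc 0 t, K s * g n s := by
    intro n t ht
    have hsubIcc : Ioc (0:ℝ) t ⊆ Icc 0 T := fun s hs => ⟨hs.1.le, hs.2.trans ht.2⟩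
    have hsubIoc : Ioc (0:ℝ) t ⊆ Ioc 0 T := Ioc_subset_Ioc_right ht.2
    have hucc : uIcc (0:ℝ) t ⊆ uIcc (0:ℝ) T := by
      rw [uIcc_of_le ht.1, uIcc_of_le hT.le]
      exact Icc_subset_Icc le_rfl ht.2
    have hFt : IntervalIntegrable (fun s => f (ρ s (x s)) • u s) volume 0 t :=
      hx_int.mono_set hucc
    have hFnt : IntervalIntegrable (fun s => f (ρn n s (xn n s)) • u s) volume 0 t :=
      (hxn_int n).mono_set hucc
    have hdiff : xn n t - x t
        = ∫ s in Ioc (0:ℝ) t, (f (ρn n s (xn n s)) • u s - f (ρ s (x s)) • u s) := by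
      rw [hxn n t ht, hx t ht, add_sub_add_left_eq_sub,
        ← intervalIntegral.integral_sub hFnt hFt, intervalIntegral.integral_of_le ht.1]
    have h2 : g n t ≤ ∫ s in Ioc (0:ℝ) t, ‖f (ρn n s (xn n s)) • u s - f (ρ s (x s)) • u s‖ := by
      show ‖xn n t - x t‖ ≤ _
      rw [hdiff]
      exact norm_integral_le_integral_norm _
    have h3 : (∫ s in Ioc (0:ℝ) t, ‖f (ρn n s (xn n s)) • u s - f (ρ s (x s)) • u s‖)
        ≤ ∫ s in Ioc (0:ℝ) t, (L_f * h n s + K s * g n s) := by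
      apply integral_mono_ae
      · exact ((intervalIntegrable_iff_integrableOn_Ioc_of_le ht.1).1 (hFnt.sub hFt)).norm
      · exact (((hhint n).mono_set hsubIoc).const_mul L_f).add ((hKgint n).mono_set hsubIcc)
      · filter_upwards [ae_restrict_of_ae_restrict_of_subset hsubIcc hu,
          ae_restrict_of_ae_restrict_of_subset hsubIcc hρ_lip] with s hus hlips
        have e1 : f (ρn n s (xn n s)) • u s - f (ρ s (x s)) • u s
            = (f (ρn n s (xn n s)) - f (ρ s (x s))) • u s := (sub_smul _ _ _).symm
        rw [e1, norm_smul, Real.norm_eq_abs]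
        have e2 : |f (ρn n s (xn n s)) - f (ρ s (x s))| * ‖u s‖
            ≤ |f (ρn n s (xn n s)) - f (ρ s (x s))| := by
          calc _ ≤ |f (ρn n s (xn n s)) - f (ρ s (x s))| * 1 :=
                mul_le_mul_of_nonneg_left hus (abs_nonneg _)
            _ = _ := mul_one _
        refine e2.trans ?_
        have e3 : |f (ρn n s (xn n s)) - f (ρ s (x s))|
            ≤ L_f * |ρn n s (xn n s) - ρ s (x s)| := hf _ _
        have e4 : |ρn n s (xn n s) - ρ s (x s)|
            ≤ |ρn n s (xn n s) - ρ s (xn n s)| + |ρ s (xn n s) - ρ s (x s)| :=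
          abs_sub_le _ _ _
        have e5 : |ρn n s (xn n s) - ρ s (xn n s)| = h n s := by
          rw [abs_sub_comm]
        have e6 : |ρ s (xn n s) - ρ s (x s)| ≤ C s * g n s := hlips (xn n s) (x s)
        calc |f (ρn n s (xn n s)) - f (ρ s (x s))|
            ≤ L_f * |ρn n s (xn n s) - ρ s (x s)| := e3
          _ ≤ L_f * (h n s + C s * g n s) := by
              apply mul_le_mul_of_nonneg_left _ hLf
              rw [← e5]
              exact e4.trans (add_le_add_right e6 _)
          _ = L_f * h n s + K s * g n s := by show _ = _ + L_f * C s * _; ring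
    have h4 : (∫ s in Ioc (0:ℝ) t, (L_f * h n s + K s * g n s))
        = L_f * (∫ s in Ioc (0:ℝ) t, h n s) + ∫ s in Ioc (0:ℝ) t, K s * g n s := by
      rw [integral_add (((hhint n).mono_set hsubIoc).const_mul L_f)
        ((hKgint n).mono_set hsubIcc), integral_const_mul]
    have h5 : (∫ s in Ioc (0:ℝ) t, h n s) ≤ ∫ s in Ioc (0:ℝ) T, h n s :=
      setIntegral_mono_set (hhint n) (Eventually.of_forall fun s => hh0 n s)
        (HasSubset.Subset.eventuallyLE hsubIoc)
    have h6 : L_f * (∫ s in Ioc (0:ℝ) t, h n s) ≤ a n := mul_le_mul_of_nonneg_left h5 hLf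
    calc g n t ≤ _ := h2
      _ ≤ _ := h3
      _ = _ := h4
      _ ≤ a n + ∫ s in Ioc (0:ℝ) t, K s * g n s := add_le_add_left h6 _
  -- choose the number of Grönwall steps
  obtain ⟨m, hm⟩ := exists_nat_ge (4 * ∫ s in Ioc (0:ℝ) T, K s)
  have hΦm : ∀ t ∈ Icc (0:ℝ) T, (∫ s in Ioc (0:ℝ) t, K s) ≤ (m:ℝ) * 4⁻¹ := by
    intro t ht
    have h1 : (∫ s in Ioc (0:ℝ) t, K s) ≤ ∫ s in Ioc (0:ℝ) T, K s :=
      setIntegral_mono_set (hKicc.mono_set Ioc_subset_Icc_self)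
        (Eventually.of_forall fun s => hK0 s)
        (HasSubset.Subset.eventuallyLE (Ioc_subset_Ioc_right ht.2))
    linarith
  -- Grönwall
  have hgron : ∀ n, ∀ t ∈ Icc (0:ℝ) T, g n t ≤ (4/3) ^ m * a n := by
    intro n t ht
    exact gronwall_int T (a n) (ha0 n) K (g n) hK0 (hg0 n) hKicc (hKgint n)
      (hkey n) m t ht (hΦm t ht)
  -- pass to D and take the limit
  have haD : ∀ n, a n ≤ L_f * ∫ s in Ioc (0:ℝ) T, D n s := fun n =>
    mul_le_mul_of_nonneg_left
      (integral_mono_ae (hhint n) (hDint n) (Eventually.of_forall fun s => hhD n s)) hLf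
  have hconv' : Tendsto (fun n => ∫ s in Ioc (0:ℝ) T, D n s) atTop (nhds 0) := by
    have : (fun n => ∫ s in Ioc (0:ℝ) T, D n s)
        = fun n => ∫ s in (0:ℝ)..T, ⨆ y : EuclideanSpace ℝ (Fin 2), |ρ s y - ρn n s y| := by
      funext n
      rw [intervalIntegral.integral_of_le hT.le]
    rw [this]
    exact hconv
  have hκ : Tendsto (fun n => (4/3:ℝ) ^ m * (L_f * ∫ s in Ioc (0:ℝ) T, D n s))
      atTop (nhds 0) := by
    have := hconv'.const_mul ((4/3:ℝ) ^ m * L_f)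
    rw [mul_zero] at this
    refine this.congr fun n => ?_
    ring
  rw [Metric.tendstoUniformlyOn_iff]
  intro ε hε
  filter_upwards [hκ (Iio_mem_nhds hε)] with n hn t ht
  have hb1 : g n t ≤ (4/3) ^ m * a n := hgron n t ht
  have hb2 : (4/3:ℝ) ^ m * a n ≤ (4/3:ℝ) ^ m * (L_f * ∫ s in Ioc (0:ℝ) T, D n s) :=
    mul_le_mul_of_nonneg_left (haD n) (by positivity)
  have hdist : dist (x t) (xn n t) = g n t := by
    rw [dist_eq_norm, ← norm_neg]
    show _ = ‖xn n t - x t‖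
    congr 1
    abel
  rw [hdist]
  exact lt_of_le_of_lt (hb1.trans hb2) hn
end
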